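/- (Correctness of the Hopcroft–Ullman dynamic programming algorithm.) Let R be an extended regular expression over an alphabet Σ and let Q be a string over Σ of length n. Then for all indices i, j, the match relation satisfies M(R)(i, j) if and only if i ≤ j ≤ n and Q[i..j) ∈ L(R). -/

import Mathlib

open Computability

/-- Extended regular expressions over alphabet `α`. -/
inductive ERE (α : Type) : Type
  | eps : ERE α
  | char : α → ERE α
  | concat : ERE α → ERE α → ERE α
  | union : ERE α → ERE α → ERE α
  | inter : ERE α → ERE α → ERE α
  | compl : ERE α → ERE α
  | star : ERE α → ERE α

/-- The language generated by an extended regular expression. -/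
def ERE.lang {α : Type} : ERE α → Language α
  | .eps => 1
  | .char a => {[a]}
  | .concat S T => S.lang * T.lang
  | .union S T => S.lang + T.lang
  | .inter S T => S.lang ⊓ T.lang
  | .compl S => (Set.univ : Set (List α)) \ S.lang
  | .star S => S.lang∗

/-- The substring `Q[i..j)`. -/
def substr {α : Type} (Q : List α) (i j : ℕ) : List α := (Q.drop i).take (j - i)

/-- The match relation `M(R)(i,j)` of the Hopcroft–Ullman dynamic programming algorithm. -/
def ERE.M {α : Type} (Q : List α) : ERE α → ℕ → ℕ → Prop
  | .eps, i, j => i = j ∧ j ≤ Q.length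
  | .char a, i, j => j = i + 1 ∧ j ≤ Q.length ∧ Q[i]? = some a
  | .concat S T, i, j => ∃ l, S.M Q i l ∧ T.M Q l j
  | .union S T, i, j => S.M Q i j ∨ T.M Q i j
  | .inter S T, i, j => S.M Q i j ∧ T.M Q i j
  | .compl S, i, j => i ≤ j ∧ j ≤ Q.length ∧ ¬ S.M Q i j
  | .star S, i, j => i ≤ j ∧ j ≤ Q.length ∧ Relation.ReflTransGen (S.M Q) i j

lemma substr_nil {α : Type} (Q : List α) (i : ℕ) : substr Q i i = [] := by
  simp [substr]

lemma substr_length {α : Type} {Q : List α} {i j : ℕ} (hij : i ≤ j) (hj : j ≤ Q.length) :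
    (substr Q i j).length = j - i := by
  simp [substr]; omega

lemma substr_append {α : Type} {Q : List α} {i l j : ℕ} (h1 : i ≤ l) (h2 : l ≤ j) :
    substr Q i l ++ substr Q l j = substr Q i j := by
  unfold substr
  rw [show j - i = (l - i) + (j - l) by omega, List.take_add, List.drop_drop,
    show i + (l - i) = l by omega]

lemma substr_split {α : Type} {Q : List α} {i j : ℕ} {u v : List α} (hij : i ≤ j)
    (hj : j ≤ Q.length) (h : substr Q i j = u ++ v) :
    i + u.length ≤ j ∧ substr Q i (i + u.length) = u ∧ substr Q (i + u.length) j = v := by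
  have hlen : (substr Q i j).length = j - i := substr_length hij hj
  rw [h, List.length_append] at hlen
  have hl : i + u.length ≤ j := by omega
  have happ : substr Q i (i + u.length) ++ substr Q (i + u.length) j = u ++ v := by
    rw [substr_append (by omega) hl, h]
  have hlu : (substr Q i (i + u.length)).length = u.length := by
    rw [substr_length (by omega) (by omega)]; omega
  obtain ⟨e1, e2⟩ := List.append_inj happ hlu
  exact ⟨hl, e1, e2⟩

lemma star_aux {α : Type} (Q : List α) (L : Language α) (M : ℕ → ℕ → Prop)
    (hM : ∀ i j, M i j ↔ i ≤ j ∧ j ≤ Q.length ∧ substr Q i j ∈ L) :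
    ∀ (ps : List (List α)) (i j : ℕ), i ≤ j → j ≤ Q.length → (∀ p ∈ ps, p ∈ L) →
      substr Q i j = ps.flatten → Relation.ReflTransGen M i j := by
  intro ps
  induction ps with
  | nil =>
    intro i j hij hj _ h
    have : (substr Q i j).length = j - i := substr_length hij hj
    rw [h] at this
    simp at this
    have : i = j := by omega
    subst this; exact Relation.ReflTransGen.refl
  | cons p ps ih =>
    intro i j hij hj hmem h
    rw [List.flatten_cons] at h
    obtain ⟨hl, e1, e2⟩ := substr_split hij hj h
    refine Relation.ReflTransGen.head ?_
      (ih (i + p.length) j hl hj (fun q hq => hmem q (.tail _ hq)) e2)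
    exact (hM i (i + p.length)).2 ⟨by omega, by omega, by rw [e1]; exact hmem p (.head _)⟩

/-- Correctness of the Hopcroft–Ullman dynamic programming algorithm: for every extended
regular expression `R` and string `Q` of length `n`, the match relation satisfies
`M(R)(i,j)` iff `i ≤ j ≤ n` and the substring `Q[i..j)` belongs to `L(R)`. -/
theorem dynamicProgramming_correct {α : Type} (R : ERE α) (Q : List α) (n : ℕ)
    (hn : n = Q.length) (i j : ℕ) :
    R.M Q i j ↔ i ≤ j ∧ j ≤ n ∧ substr Q i j ∈ R.lang := by
  subst hn
  induction R generalizing i j with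
  | eps =>
    simp only [ERE.M, ERE.lang, Language.mem_one]
    constructor
    · rintro ⟨rfl, h⟩
      exact ⟨le_refl _, h, substr_nil _ _⟩
    · rintro ⟨h1, h2, h3⟩
      have := substr_length h1 h2
      rw [h3] at this
      simp at this
      exact ⟨by omega, h2⟩
  | char a =>
    simp only [ERE.M, ERE.lang, Set.mem_singleton_iff]
    constructor
    · rintro ⟨rfl, h2, h3⟩
      have hi : i < Q.length := by omega
      refine ⟨by omega, h2, ?_⟩
      have hd : Q.drop i = Q[i] :: Q.drop (i + 1) := List.drop_eq_getElem_cons hi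
      have hget : Q[i] = a := by
        simpa [List.getElem?_eq_getElem hi] using h3
      simp [substr, hd, hget]
      rfl
    · rintro ⟨h1, h2, h3⟩
      have hlen := substr_length h1 h2
      rw [h3] at hlen
      simp at hlen
      have hj : j = i + 1 := by omega
      subst hj
      have hi : i < Q.length := by omega
      have hd : Q.drop i = Q[i] :: Q.drop (i + 1) := List.drop_eq_getElem_cons hi
      have h3' : Q[i] = a := by
        rw [substr, Nat.add_sub_cancel_left, hd, List.take_succ_cons, List.take_zero] at h3
        have h3 : [Q[i]] = [a] := h3
        injection h3
      refine ⟨rfl, h2, ?_⟩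
      rw [List.getElem?_eq_getElem hi, h3']
  | concat S T ihS ihT =>
    simp only [ERE.M, ERE.lang]
    constructor
    · rintro ⟨l, hS, hT⟩
      obtain ⟨h1, h2, h3⟩ := (ihS i l).1 hS
      obtain ⟨h4, h5, h6⟩ := (ihT l j).1 hT
      exact ⟨le_trans h1 h4, h5, Language.mem_mul.2 ⟨_, h3, _, h6, substr_append h1 h4⟩⟩
    · rintro ⟨h1, h2, h3⟩
      obtain ⟨u, hu, v, hv, huv⟩ := Language.mem_mul.1 h3
      obtain ⟨hl, e1, e2⟩ := substr_split h1 h2 huv.symm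
      exact ⟨i + u.length, (ihS _ _).2 ⟨by omega, by omega, by rw [e1]; exact hu⟩,
        (ihT _ _).2 ⟨hl, h2, by rw [e2]; exact hv⟩⟩
  | union S T ihS ihT =>
    simp only [ERE.M, ERE.lang, ihS, ihT, Language.mem_add]
    tauto
  | inter S T ihS ihT =>
    constructor
    · rintro ⟨hS, hT⟩
      obtain ⟨h1, h2, h3⟩ := (ihS i j).1 hS
      obtain ⟨_, _, h6⟩ := (ihT i j).1 hT
      exact ⟨h1, h2, h3, h6⟩
    · rintro ⟨h1, h2, h3⟩
      exact ⟨(ihS i j).2 ⟨h1, h2, h3.1⟩, (ihT i j).2 ⟨h1, h2, h3.2⟩⟩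
  | compl S ihS =>
    constructor
    · rintro ⟨h1, h2, hn⟩
      exact ⟨h1, h2, trivial, fun hm => hn ((ihS i j).2 ⟨h1, h2, hm⟩)⟩
    · rintro ⟨h1, h2, h3⟩
      exact ⟨h1, h2, fun hM => h3.2 (((ihS i j).1 hM).2.2)⟩
  | star S ihS =>
    simp only [ERE.M, ERE.lang]
    constructor
    · rintro ⟨h1, h2, h3⟩
      have key : ∀ c, Relation.ReflTransGen (S.M Q) i c → i ≤ c ∧ substr Q i c ∈ S.lang∗ := by
        intro c hc
        induction hc with
        | refl => exact ⟨le_refl _, by rw [substr_nil]; exact Language.nil_mem_kstar _⟩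
        | tail hab hbc ih =>
          obtain ⟨hb1, hb2, hb3⟩ := (ihS _ _).1 hbc
          refine ⟨le_trans ih.1 hb1, ?_⟩
          have hm : substr Q i _ ++ substr Q _ _ ∈ S.lang∗ * S.lang :=
            Language.mem_mul.2 ⟨_, ih.2, _, hb3, rfl⟩
          rw [substr_append ih.1 hb1] at hm
          obtain ⟨x, hx, y, hy, hxy⟩ := Language.mem_mul.1 hm
          obtain ⟨Ls, rfl, hLs⟩ := Language.mem_kstar.1 hx
          refine hxy ▸ Language.mem_kstar.2 ⟨Ls ++ [y], by simp, ?_⟩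
          intro z hz
          rcases List.mem_append.1 hz with h | h
          · exact hLs z h
          · simp at h; subst h; exact hy
      exact ⟨h1, h2, (key j h3).2⟩
    · rintro ⟨h1, h2, h3⟩
      obtain ⟨ps, hps, hmem⟩ := Language.mem_kstar.1 h3
      exact ⟨h1, h2, star_aux Q S.lang _ ihS ps i j h1 h2 hmem hps⟩
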